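/- arXiv:2004.14518 — 2 statements merged into one kernel-verified Lean document; each statement's English description precedes it below -/
import Mathlib

section
/- Fix an integer n ≥ 1 and integers ℓ, m with 0 ≤ m ≤ ℓ and 2ℓ ≤ n. Then c(w_ℓ) + c(w_{n−ℓ}) − c(w_m + w_{n−m}) = (ℓ − m)(n − ℓ − m) + (ℓ − m) − ℓ²/n. (This is the equivariant degree shift C_m of the perverse braiding equivalence in the stratified Mukai flop example, in the conformal-field-theory normalization of the central charge.) -/
open RealInnerProductSpace

/-- The `a`-th fundamental weight of `sl_n`:
`w_a = (∑_{i=1}^{a} e_i) − (a/n)·(∑_{i=1}^{n} e_i)`. -/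
noncomputable def fundWeight (n a : ℕ) : EuclideanSpace ℝ (Fin n) :=
  (WithLp.equiv 2 (Fin n → ℝ)).symm
    (fun i => (if (i : ℕ) + 1 ≤ a then (1 : ℝ) else 0) - (a : ℝ) / (n : ℝ))

/-- The Weyl vector `ρ = ∑_{i=1}^{n} ((n+1)/2 − i)·e_i`. -/
noncomputable def weylVector (n : ℕ) : EuclideanSpace ℝ (Fin n) :=
  (WithLp.equiv 2 (Fin n → ℝ)).symm
    (fun i => ((n : ℝ) + 1) / 2 - (((i : ℕ) : ℝ) + 1))

/-- The classical dimension `d(μ) = ⟨μ, ρ⟩`. -/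
noncomputable def classicalDim (n : ℕ) (μ : EuclideanSpace ℝ (Fin n)) : ℝ :=
  ⟪μ, weylVector n⟫

/-- The conformal-dimension prefactor `c(μ) = (1/2)·⟨μ, μ + 2ρ⟩`. -/
noncomputable def confDim (n : ℕ) (μ : EuclideanSpace ℝ (Fin n)) : ℝ :=
  (1 / 2) * ⟪μ, μ + (2 : ℝ) • weylVector n⟫

lemma sum_indicator_aux (n a : ℕ) (ha : a ≤ n) (f : ℕ → ℝ) :
    ∑ i ∈ Finset.range n, (if i + 1 ≤ a then f i else 0) = ∑ i ∈ Finset.range a, f i := by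
  rw [← Finset.sum_subset (Finset.range_subset_range.2 ha)]
  · exact Finset.sum_congr rfl fun i hi => if_pos (Finset.mem_range.1 hi)
  · intro i _ hi
    simp only [Finset.mem_range, not_lt] at hi
    exact if_neg (by omega)

lemma sum_range_cast_aux (a : ℕ) : ∑ i ∈ Finset.range a, (i : ℝ) = a * (a - 1) / 2 := by
  induction a with
  | zero => simp
  | succ k ih => rw [Finset.sum_range_succ, ih]; push_cast; ring

lemma inner_fund_aux (n a b : ℕ) (hn : 1 ≤ n) (hb : b ≤ n) (hab : a ≤ b) :
    ⟪fundWeight n a, fundWeight n b⟫ = (a : ℝ) - a * b / n := by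
  have hnn : (n : ℝ) ≠ 0 := by positivity
  simp only [fundWeight, PiLp.inner_apply, RCLike.inner_apply', conj_trivial,
    WithLp.equiv_symm_apply, PiLp.toLp_apply]
  rw [Fin.sum_univ_eq_sum_range (fun i =>
    ((if i + 1 ≤ a then (1:ℝ) else 0) - a / n) * ((if i + 1 ≤ b then (1:ℝ) else 0) - b / n))]
  have key : ∀ i, ((if i + 1 ≤ a then (1:ℝ) else 0) - a / n) *
      ((if i + 1 ≤ b then (1:ℝ) else 0) - b / n)
      = ((if i + 1 ≤ a then (1 - (b:ℝ)/n) else 0) + (if i + 1 ≤ b then (-((a:ℝ)/n)) else 0)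
        + a * b / (n * n)) := by
    intro i
    by_cases h1 : i + 1 ≤ a
    · simp only [if_pos h1, if_pos (h1.trans hab)]; ring
    · simp only [if_neg h1]
      by_cases h2 : i + 1 ≤ b
      · simp only [if_pos h2]; ring
      · simp only [if_neg h2]; ring
  rw [Finset.sum_congr rfl fun i _ => key i]
  rw [Finset.sum_add_distrib, Finset.sum_add_distrib,
    sum_indicator_aux n a (hab.trans hb) (fun _ => 1 - (b:ℝ)/n),
    sum_indicator_aux n b hb (fun _ => -((a:ℝ)/n)),
    Finset.sum_const, Finset.sum_const, Finset.sum_const,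
    Finset.card_range, Finset.card_range, Finset.card_range]
  simp only [nsmul_eq_mul]
  field_simp
  ring

lemma inner_fund_rho_aux (n a : ℕ) (hn : 1 ≤ n) (ha : a ≤ n) :
    ⟪fundWeight n a, weylVector n⟫ = (a : ℝ) * ((n : ℝ) - a) / 2 := by
  have hnn : (n : ℝ) ≠ 0 := by positivity
  simp only [fundWeight, weylVector, PiLp.inner_apply, RCLike.inner_apply', conj_trivial,
    WithLp.equiv_symm_apply, PiLp.toLp_apply]
  rw [Fin.sum_univ_eq_sum_range (fun i =>
    ((if i + 1 ≤ a then (1:ℝ) else 0) - a / n) * (((n:ℝ) + 1) / 2 - ((i:ℝ) + 1)))]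
  have key : ∀ i, ((if i + 1 ≤ a then (1:ℝ) else 0) - (a:ℝ) / n) *
      (((n:ℝ) + 1) / 2 - ((i:ℝ) + 1))
      = ((if i + 1 ≤ a then (((n:ℝ) + 1) / 2 - ((i:ℝ) + 1)) else 0)
        - ((a:ℝ)/n) * (((n:ℝ) + 1) / 2 - 1) + ((a:ℝ)/n) * (i:ℝ)) := by
    intro i
    by_cases h1 : i + 1 ≤ a
    · simp only [if_pos h1]; ring
    · simp only [if_neg h1]; ring
  rw [Finset.sum_congr rfl fun i _ => key i]
  rw [Finset.sum_add_distrib, Finset.sum_sub_distrib,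
    sum_indicator_aux n a ha (fun i => (((n:ℝ) + 1) / 2 - ((i:ℝ) + 1)))]
  simp only [Finset.sum_sub_distrib, Finset.sum_add_distrib, ← Finset.mul_sum,
    sum_range_cast_aux, Finset.sum_const, Finset.card_range, nsmul_eq_mul]
  field_simp
  ring

lemma confDim_expand (n : ℕ) (μ : EuclideanSpace ℝ (Fin n)) :
    confDim n μ = (1/2) * ⟪μ, μ⟫ + ⟪μ, weylVector n⟫ := by
  rw [confDim, inner_add_right, real_inner_smul_right]; ring

lemma confDim_add (n : ℕ) (μ ν : EuclideanSpace ℝ (Fin n)) :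
    confDim n (μ + ν) = confDim n μ + confDim n ν + ⟪μ, ν⟫ := by
  simp only [confDim_expand, inner_add_left, inner_add_right]
  rw [real_inner_comm ν μ]; ring

/-- `c(w_ℓ) + c(w_{n−ℓ}) − c(w_m + w_{n−m}) = (ℓ − m)(n − ℓ − m) + (ℓ − m) − ℓ²/n`. -/
theorem stmt1 (n ℓ m : ℕ) (hn : 1 ≤ n) (hm : m ≤ ℓ) (hℓ : 2 * ℓ ≤ n) :
    confDim n (fundWeight n ℓ) + confDim n (fundWeight n (n - ℓ)) -
        confDim n (fundWeight n m + fundWeight n (n - m)) =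
      ((ℓ : ℝ) - (m : ℝ)) * ((n : ℝ) - (ℓ : ℝ) - (m : ℝ)) + ((ℓ : ℝ) - (m : ℝ)) -
        (ℓ : ℝ) ^ 2 / (n : ℝ) := by
  have hnn : (n : ℝ) ≠ 0 := by positivity
  have hℓn : ℓ ≤ n := le_trans (by omega) hℓ
  have hmn : m ≤ n := hm.trans hℓn
  have hm2 : m ≤ n - m := by omega
  have hnl : n - ℓ ≤ n := Nat.sub_le n ℓ
  have hnm : n - m ≤ n := Nat.sub_le n m
  rw [confDim_add, confDim_expand, confDim_expand, confDim_expand, confDim_expand,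
    inner_fund_aux n ℓ ℓ hn hℓn le_rfl,
    inner_fund_aux n (n - ℓ) (n - ℓ) hn hnl le_rfl,
    inner_fund_aux n m m hn hmn le_rfl,
    inner_fund_aux n (n - m) (n - m) hn hnm le_rfl,
    inner_fund_aux n m (n - m) hn hnm hm2,
    inner_fund_rho_aux n ℓ hn hℓn,
    inner_fund_rho_aux n (n - ℓ) hn hnl,
    inner_fund_rho_aux n m hn hmn,
    inner_fund_rho_aux n (n - m) hn hnm]
  push_cast [Nat.cast_sub hℓn, Nat.cast_sub hmn]
  field_simp
  ring
end

section
/- Fix an integer n ≥ 1 and integers ℓ, m with 0 ≤ m ≤ ℓ and 2ℓ ≤ n. Then c(w_ℓ) + c(w_{n−ℓ}) − c(w_m + w_{n−m}) + ⟨w_ℓ, w_{n−ℓ}⟩ = (ℓ − m)(n − ℓ − m) + (ℓ − m); in particular this geometrically normalized equivariant degree shift C_m^X is an integer. (This reproduces the grading shifts of Kamnitzer's derived equivalence for stratified Mukai flops of cotangent bundles of Grassmannians.) -/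
open RealInnerProductSpace

private lemma sum_ind (n a : ℕ) (h : a ≤ n) :
    ∑ i ∈ Finset.range n, (if i + 1 ≤ a then (1 : ℝ) else 0) = a := by
  have hf : (Finset.range n).filter (fun i => i + 1 ≤ a) = Finset.range a := by
    ext i; simp; omega
  rw [Finset.sum_boole, hf, Finset.card_range]

private lemma gauss (a : ℕ) : ∑ i ∈ Finset.range a, ((i : ℝ) + 1) = a * (a + 1) / 2 := by
  induction a with
  | zero => simp
  | succ k ih => rw [Finset.sum_range_succ, ih]; push_cast; ring

private lemma inner_fw (n a b : ℕ) (ha : a ≤ n) (hb : b ≤ n) (hab : a ≤ b) :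
    ⟪fundWeight n a, fundWeight n b⟫ = (a : ℝ) - a * b / n := by
  rcases Nat.eq_zero_or_pos n with rfl | hn
  · interval_cases a; interval_cases b; rw [PiLp.inner_apply]; simp
  have hn' : (n : ℝ) ≠ 0 := by positivity
  rw [real_inner_comm]
  simp only [fundWeight, PiLp.inner_apply, RCLike.inner_apply, starRingEnd_apply, star_trivial,
    WithLp.equiv_symm_apply, PiLp.toLp_apply]
  rw [Fin.sum_univ_eq_sum_range
    (fun i => ((if i + 1 ≤ a then (1:ℝ) else 0) - a / n) * ((if i + 1 ≤ b then (1:ℝ) else 0) - b / n))]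
  have key : ∀ i, ((if i + 1 ≤ a then (1:ℝ) else 0) - a / n) * ((if i + 1 ≤ b then (1:ℝ) else 0) - b / n)
      = (if i + 1 ≤ a then (1:ℝ) else 0) - (b / n) * (if i + 1 ≤ a then (1:ℝ) else 0)
        - (a / n) * (if i + 1 ≤ b then (1:ℝ) else 0) + (a / n) * (b / n) := by
    intro i
    by_cases h1 : i + 1 ≤ a
    · have h2 : i + 1 ≤ b := le_trans h1 hab
      simp [h1, h2]; ring
    · by_cases h2 : i + 1 ≤ b <;> simp [h1, h2] <;> ring
  simp only [key]
  rw [Finset.sum_add_distrib, Finset.sum_sub_distrib, Finset.sum_sub_distrib,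
    ← Finset.mul_sum, ← Finset.mul_sum, sum_ind n a ha, sum_ind n b hb,
    Finset.sum_const, Finset.card_range, nsmul_eq_mul]
  field_simp
  ring

private lemma inner_fw_rho (n a : ℕ) (ha : a ≤ n) :
    ⟪fundWeight n a, weylVector n⟫ = (a : ℝ) * ((n : ℝ) - a) / 2 := by
  rcases Nat.eq_zero_or_pos n with rfl | hn
  · interval_cases a; simp [fundWeight, weylVector, PiLp.inner_apply]
  have hn' : (n : ℝ) ≠ 0 := by positivity
  rw [real_inner_comm]
  simp only [fundWeight, weylVector, PiLp.inner_apply, RCLike.inner_apply, starRingEnd_apply,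
    star_trivial, WithLp.equiv_symm_apply, PiLp.toLp_apply]
  rw [Fin.sum_univ_eq_sum_range
    (fun i => ((if i + 1 ≤ a then (1:ℝ) else 0) - a / n) * (((n:ℝ) + 1) / 2 - ((i:ℝ) + 1)))]
  have key : ∀ i, ((if i + 1 ≤ a then (1:ℝ) else 0) - a / n) * (((n:ℝ) + 1) / 2 - ((i:ℝ) + 1))
      = (if i + 1 ≤ a then (((n:ℝ) + 1) / 2 - ((i:ℝ) + 1)) else 0)
        - (a / n) * (((n:ℝ) + 1) / 2) + (a / n) * ((i:ℝ) + 1) := by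
    intro i; by_cases h1 : i + 1 ≤ a <;> simp [h1] <;> ring
  simp only [key]
  have hf : (Finset.range n).filter (fun i => i + 1 ≤ a) = Finset.range a := by
    ext i; simp; omega
  rw [Finset.sum_add_distrib, Finset.sum_sub_distrib, ← Finset.mul_sum,
    ← Finset.sum_filter, hf, Finset.sum_sub_distrib, Finset.sum_const, Finset.card_range,
    nsmul_eq_mul, gauss, Finset.sum_const, Finset.card_range, nsmul_eq_mul,
    ← Finset.mul_sum, gauss]
  field_simp
  ring

private lemma confDim_eq (n : ℕ) (μ : EuclideanSpace ℝ (Fin n)) :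
    confDim n μ = 1 / 2 * ⟪μ, μ⟫ + ⟪μ, weylVector n⟫ := by
  rw [confDim, inner_add_right, real_inner_smul_right]; ring

/-- `c(w_ℓ) + c(w_{n−ℓ}) − c(w_m + w_{n−m}) + ⟨w_ℓ, w_{n−ℓ}⟩ = (ℓ − m)(n − ℓ − m) + (ℓ − m)`;
in particular this geometrically normalized equivariant degree shift `C_m^X` is an integer. -/
theorem stmt2 (n ℓ m : ℕ) (hn : 1 ≤ n) (hm : m ≤ ℓ) (hℓ : 2 * ℓ ≤ n) :
    (confDim n (fundWeight n ℓ) + confDim n (fundWeight n (n - ℓ)) -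
        confDim n (fundWeight n m + fundWeight n (n - m)) +
        ⟪fundWeight n ℓ, fundWeight n (n - ℓ)⟫ =
      ((ℓ : ℝ) - (m : ℝ)) * ((n : ℝ) - (ℓ : ℝ) - (m : ℝ)) + ((ℓ : ℝ) - (m : ℝ))) ∧
    ∃ z : ℤ, confDim n (fundWeight n ℓ) + confDim n (fundWeight n (n - ℓ)) -
        confDim n (fundWeight n m + fundWeight n (n - m)) +
        ⟪fundWeight n ℓ, fundWeight n (n - ℓ)⟫ = (z : ℝ) := by
  have hn' : (n : ℝ) ≠ 0 := by positivity
  have hℓn : ℓ ≤ n := by omega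
  have hmn : m ≤ n := by omega
  have hc1 : ((n - ℓ : ℕ) : ℝ) = (n : ℝ) - ℓ := by
    rw [Nat.cast_sub hℓn]
  have hc2 : ((n - m : ℕ) : ℝ) = (n : ℝ) - m := by
    rw [Nat.cast_sub hmn]
  have main : confDim n (fundWeight n ℓ) + confDim n (fundWeight n (n - ℓ)) -
      confDim n (fundWeight n m + fundWeight n (n - m)) +
      ⟪fundWeight n ℓ, fundWeight n (n - ℓ)⟫ =
      ((ℓ : ℝ) - (m : ℝ)) * ((n : ℝ) - (ℓ : ℝ) - (m : ℝ)) + ((ℓ : ℝ) - (m : ℝ)) := by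
    rw [confDim_eq, confDim_eq, confDim_eq]
    simp only [inner_add_left, inner_add_right]
    have hswap : ⟪fundWeight n (n - m), fundWeight n m⟫ = (m : ℝ) - m * (n - m : ℕ) / n := by
      rw [real_inner_comm, inner_fw n m (n - m) hmn (by omega) (by omega)]
    rw [hswap, inner_fw n ℓ ℓ hℓn hℓn le_rfl, inner_fw n (n - ℓ) (n - ℓ) (by omega) (by omega) le_rfl,
      inner_fw n m m hmn hmn le_rfl, inner_fw n (n - m) (n - m) (by omega) (by omega) le_rfl,
      inner_fw n ℓ (n - ℓ) hℓn (by omega) (by omega), inner_fw n m (n - m) hmn (by omega) (by omega),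
      inner_fw_rho n ℓ hℓn, inner_fw_rho n (n - ℓ) (by omega),
      inner_fw_rho n m hmn, inner_fw_rho n (n - m) (by omega)]
    rw [hc1, hc2]
    field_simp
    ring
  refine ⟨main, ⟨((ℓ : ℤ) - m) * ((n : ℤ) - ℓ - m) + ((ℓ : ℤ) - m), ?_⟩⟩
  rw [main]; push_cast; ring
end
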